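/- Suppose the sequence d̂ : ℤ² → ℂ is annihilated by some trigonometric polynomial with coefficients supported in a finite set Λ₀, and let Λ ⊇ Λ₀ + Γ for a finite set Γ with |Γ| ≥ 2. Then the block-Toeplitz matrix T built from d̂ with filter support Λ has nullspace of dimension at least |Γ|. -/

import Mathlib

open Pointwise

/-- suppose the sequence `d : ℤ² → ℂ` is annihilated by a nonzero
filter `μ₀` supported in a finite set `Λ₀`, and `Λ ⊇ Λ₀ + Γ` for a finite set
`Γ` with `|Γ| ≥ 2`.  Then the nullspace of the block-Toeplitz operator built
from `d` with filter support `Λ` (the space of filters `c` on `Λ` with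
`(c ∗ d)[m] = 0` for all `m ∈ ℤ²`) has dimension at least `|Γ|`. -/
theorem nullspace_dim_ge_of_shifted_filters
    (d : ℤ × ℤ → ℂ) (Λ₀ Γ Λ : Finset (ℤ × ℤ))
    (hΛ : Λ₀ + Γ ⊆ Λ) (hΓ : 2 ≤ Γ.card)
    (μ₀ : ℤ × ℤ → ℂ) (hsupp : ∀ k ∉ Λ₀, μ₀ k = 0)
    (hne : ∃ k ∈ Λ₀, μ₀ k ≠ 0)
    (hann : ∀ m : ℤ × ℤ, ∑ k ∈ Λ₀, μ₀ k * d (m - k) = 0) :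
    ∃ W : Submodule ℂ (Λ → ℂ),
      (∀ c ∈ W, ∀ m : ℤ × ℤ, ∑ k : Λ, c k * d (m - (k : ℤ × ℤ)) = 0) ∧
      Γ.card ≤ Module.finrank ℂ W := by
  classical
  set f : Γ → (Λ → ℂ) := fun γ k => μ₀ ((k : ℤ × ℤ) - γ) with hf
  refine ⟨Submodule.span ℂ (Set.range f), ?_, ?_⟩
  · -- annihilation
    intro c hc
    induction hc using Submodule.span_induction with
    | mem c hc =>
        obtain ⟨γ, rfl⟩ := hc
        intro m
        have h1 : ∑ k : Λ, f γ k * d (m - (k : ℤ × ℤ))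
            = ∑ k ∈ Λ, μ₀ (k - (γ : ℤ × ℤ)) * d (m - k) := by
          rw [← Finset.sum_coe_sort Λ (fun k => μ₀ (k - (γ : ℤ × ℤ)) * d (m - k))]
        rw [h1]
        have hsub : Λ₀.image (· + (γ : ℤ × ℤ)) ⊆ Λ := by
          intro x hx
          obtain ⟨k, hk, rfl⟩ := Finset.mem_image.mp hx
          exact hΛ (Finset.add_mem_add hk γ.2)
        rw [← Finset.sum_subset hsub]
        · rw [Finset.sum_image (by intro a _ b _ h; exact add_right_cancel h)]
          have : ∀ k ∈ Λ₀, μ₀ (k + (γ : ℤ × ℤ) - γ) * d (m - (k + (γ : ℤ × ℤ)))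
              = μ₀ k * d ((m - γ) - k) := by
            intro k _
            congr 1
            · congr 1; abel
            · congr 1; abel
          rw [Finset.sum_congr rfl this, hann (m - γ)]
        · intro k _ hk
          have : μ₀ (k - (γ : ℤ × ℤ)) = 0 := by
            by_contra h
            have hmem : k - (γ : ℤ × ℤ) ∈ Λ₀ := by
              by_contra h'; exact h (hsupp _ h')
            exact hk (Finset.mem_image.mpr ⟨_, hmem, by abel⟩)
          rw [this, zero_mul]
    | zero => intro m; simp
    | add x y _ _ hx hy =>
        intro m
        simp only [Pi.add_apply, add_mul, Finset.sum_add_distrib, hx m, hy m, add_zero]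
    | smul a x _ hx =>
        intro m
        simp only [Pi.smul_apply, smul_eq_mul, mul_assoc, ← Finset.mul_sum, hx m, mul_zero]
  · -- dimension bound
    have li : LinearIndependent ℂ f := by
      rw [Fintype.linearIndependent_iff]
      intro g hg
      -- the coefficient identity holds at every point of ℤ × ℤ
      have hzero : ∀ m : ℤ × ℤ, ∑ γ : Γ, g γ * μ₀ (m - γ) = 0 := by
        intro m
        by_cases hm : m ∈ Λ
        · have := congrFun hg ⟨m, hm⟩
          simpa [f, Finset.sum_apply, smul_eq_mul] using this
        · apply Finset.sum_eq_zero
          intro γ _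
          have : μ₀ (m - (γ : ℤ × ℤ)) = 0 := by
            by_contra h
            have hmem : m - (γ : ℤ × ℤ) ∈ Λ₀ := by
              by_contra h'; exact h (hsupp _ h')
            exact hm (hΛ (by
              have : m = (m - (γ : ℤ × ℤ)) + γ := by abel
              rw [this]
              exact Finset.add_mem_add hmem γ.2))
          rw [this, mul_zero]
      -- pass to the group algebra
      set A : AddMonoidAlgebra ℂ (ℤ × ℤ) :=
        ∑ γ : Γ, AddMonoidAlgebra.single (γ : ℤ × ℤ) (g γ) with hA
      set B : AddMonoidAlgebra ℂ (ℤ × ℤ) :=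
        ∑ k ∈ Λ₀, AddMonoidAlgebra.single k (μ₀ k) with hB
      have hABcoeff : ∀ m : ℤ × ℤ, (A * B).coeff m = ∑ γ : Γ, g γ * μ₀ (m - γ) := by
        intro m
        rw [hA, hB, Finset.sum_mul]
        rw [AddMonoidAlgebra.coeff_sum, Finsupp.finset_sum_apply]
        refine Finset.sum_congr rfl ?_
        intro γ _
        rw [Finset.mul_sum, AddMonoidAlgebra.coeff_sum, Finsupp.finset_sum_apply]
        have key : ∀ k ∈ Λ₀,
            (AddMonoidAlgebra.single (γ : ℤ × ℤ) (g γ) * AddMonoidAlgebra.single k (μ₀ k)).coeff m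
              = if k = m - (γ : ℤ × ℤ) then g γ * μ₀ k else 0 := by
          intro k _
          rw [AddMonoidAlgebra.single_mul_single, AddMonoidAlgebra.coeff_single_apply]
          congr 1
          simp only [eq_iff_iff]
          constructor
          · intro h; rw [← h]; abel
          · intro h; rw [h]; abel
        refine (Finset.sum_congr rfl key).trans ?_
        rw [Finset.sum_ite_eq' Λ₀ (m - (γ : ℤ × ℤ)) (fun k => g γ * μ₀ k)]
        by_cases hmem : m - (γ : ℤ × ℤ) ∈ Λ₀
        · simp [hmem]
        · simp [hmem, hsupp _ hmem]
      have hAB : A * B = 0 := by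
        ext m
        rw [hABcoeff m, hzero m]; rfl
      have hBne : B ≠ 0 := by
        obtain ⟨k₀, hk₀, hk₀ne⟩ := hne
        intro h0
        have hBk : B.coeff k₀ = μ₀ k₀ := by
          rw [hB, AddMonoidAlgebra.coeff_sum, Finsupp.finset_sum_apply]
          refine (Finset.sum_congr rfl fun k _ => AddMonoidAlgebra.coeff_single_apply).trans ?_
          simp [hk₀]
        rw [h0] at hBk
        exact hk₀ne (by simpa using hBk.symm)
      have hA0 : A = 0 := by
        rcases mul_eq_zero.mp hAB with h | h
        · exact h
        · exact absurd h hBne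
      intro i
      have hAi : A.coeff (i : ℤ × ℤ) = g i := by
        rw [hA, AddMonoidAlgebra.coeff_sum, Finsupp.finset_sum_apply]
        refine (Finset.sum_congr rfl fun γ _ => AddMonoidAlgebra.coeff_single_apply).trans ?_
        simp [Subtype.coe_inj]
      rw [hA0] at hAi
      simpa using hAi.symm
    have := finrank_span_eq_card li
    rw [this, Fintype.card_coe]
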